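/- Let Σ' = Σ'_i × Σ'_{-i} ⊆ Σ and σ ∈ Σ'_i. Then σ is conditionally dominated' on Σ' if and only if σ is conditionally dominated on Σ'. -/

import Mathlib

open scoped BigOperators

noncomputable section

/-- A probability distribution on a finite type, represented as a weight function. -/
def IsDist {α : Type*} [Fintype α] (p : α → ℝ) : Prop :=
  (∀ a, 0 ≤ p a) ∧ ∑ a, p a = 1

/-- The probability of a set under a weight function. -/
def probOf {α : Type*} [Fintype α] (p : α → ℝ) (E : Set α) : ℝ :=
  ∑ a, E.indicator p a

/-- A lexicographic probability sequence on a finite type. -/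
structure LPS (Ω : Type*) [Fintype Ω] where
  m : ℕ
  μ : Fin (m + 1) → Ω → ℝ
  dist : ∀ ℓ, IsDist (μ ℓ)

namespace LPS

variable {Ω : Type*} [Fintype Ω]

open Classical in
/-- `(μ⃗(V | E))₀`: the conditional probability of `V` given `E` under the first measure
of the LPS that gives `E` positive probability (0 if there is none). -/
def condFirst (L : LPS Ω) (V E : Set Ω) : ℝ :=
  if h : ∃ ℓ : ℕ, ∃ hℓ : ℓ < L.m + 1, 0 < probOf (L.μ ⟨ℓ, hℓ⟩) E then
    probOf (L.μ ⟨Nat.find h, (Nat.find_spec h).choose⟩) (V ∩ E) /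
      probOf (L.μ ⟨Nat.find h, (Nat.find_spec h).choose⟩) E
  else 0

/-- Expectation of `f` under the first measure of `μ⃗|E`. -/
def condExp (L : LPS Ω) (E : Set Ω) (f : Ω → ℝ) : ℝ :=
  ∑ a, L.condFirst {a} E * f a

end LPS

/-- The experience of player `i` along a history: the sequence of information-set labels of
`i` visited together with the actions `i` took there. `experGo owner label i pre rest`
processes the history `pre ++ rest`, where `pre` has already been traversed. -/
def experGo {Act Lab ι : Type*} [DecidableEq ι] (owner : List Act → ι)
    (label : List Act → Lab) (i : ι) : List Act → List Act → List (Lab × Act)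
  | _, [] => []
  | pre, a :: rest =>
      (if owner pre = i then [(label pre, a)] else []) ++
        experGo owner label i (pre ++ [a]) rest

/-- A finite extensive-form game with perfect recall for `n` players and no chance moves,
presented via its set of histories (sequences of actions from the root). `owner h` is the
player who moves at a nonterminal history `h`, `label h` is the information set containing
`h`, and `payoff i h` is `i`'s utility at a terminal history `h`. -/
structure ExtGame (n : ℕ) where
  Act : Type
  Lab : Type
  actFin : Fintype Act
  actDeq : DecidableEq Act
  actNe : Nonempty Act
  labFin : Fintype Lab
  labDeq : DecidableEq Lab
  maxLen : ℕ
  H : Set (List Act)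
  root_mem : [] ∈ H
  prefix_closed : ∀ (h : List Act) (a : Act), h ++ [a] ∈ H → h ∈ H
  len_bound : ∀ h ∈ H, h.length ≤ maxLen
  owner : List Act → Fin n
  label : List Act → Lab
  payoff : Fin n → List Act → ℝ
  payoff_mem : ∀ (i : Fin n) (h : List Act), h ∈ H → (∀ a, h ++ [a] ∉ H) →
    payoff i h ∈ Set.Icc (0 : ℝ) 1
  same_owner : ∀ h h', h ∈ H → h' ∈ H → (∃ a, h ++ [a] ∈ H) → (∃ a, h' ++ [a] ∈ H) →
    label h = label h' → owner h = owner h'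
  same_actions : ∀ h h', h ∈ H → h' ∈ H → (∃ a, h ++ [a] ∈ H) → (∃ a, h' ++ [a] ∈ H) →
    label h = label h' → ∀ a, (h ++ [a] ∈ H ↔ h' ++ [a] ∈ H)
  no_two_on_path : ∀ h h', h ∈ H → h' ∈ H → (∃ a, h ++ [a] ∈ H) → (∃ a, h' ++ [a] ∈ H) →
    label h = label h' → h <+: h' → h = h'
  perfect_recall : ∀ h h', h ∈ H → h' ∈ H → (∃ a, h ++ [a] ∈ H) → (∃ a, h' ++ [a] ∈ H) →
    label h = label h' →
    experGo owner label (owner h) [] h = experGo owner label (owner h) [] h'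

attribute [instance] ExtGame.actFin ExtGame.actDeq ExtGame.actNe ExtGame.labFin
  ExtGame.labDeq

namespace ExtGame

variable {n : ℕ}

/-- `h` is a decision node. -/
def Dec (G : ExtGame n) (h : List G.Act) : Prop := h ∈ G.H ∧ ∃ a, h ++ [a] ∈ G.H

/-- `h` is a decision node of player `i`. -/
def DecOf (G : ExtGame n) (i : Fin n) (h : List G.Act) : Prop := G.Dec h ∧ G.owner h = i

/-- `c` is (the label of) an information set of player `i`. -/
def IsInfo (G : ExtGame n) (i : Fin n) (c : G.Lab) : Prop :=
  ∃ h, G.DecOf i h ∧ G.label h = c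

/-- A pure strategy of player `i`: an assignment of an available action to each
information set of `i`. -/
def PStrat (G : ExtGame n) (i : Fin n) : Type :=
  {s : G.Lab → G.Act // ∀ h, G.DecOf i h → h ++ [s (G.label h)] ∈ G.H}

instance (G : ExtGame n) (i : Fin n) : Finite (G.PStrat i) := Subtype.finite

noncomputable instance (G : ExtGame n) (i : Fin n) : Fintype (G.PStrat i) :=
  Fintype.ofFinite _

noncomputable instance (G : ExtGame n) (i : Fin n) : DecidableEq (G.PStrat i) :=
  Classical.decEq _

/-- Opponents' pure-strategy profiles. -/
abbrev OppProf (G : ExtGame n) (i : Fin n) : Type :=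
  (j : {j : Fin n // j ≠ i}) → G.PStrat j.val

/-- Combining a strategy for `i` with an opponents' profile. -/
def combine (G : ExtGame n) (i : Fin n) (s : G.PStrat i) (τ : G.OppProf i) :
    (j : Fin n) → G.PStrat j :=
  fun j => if h : j = i then cast (congrArg G.PStrat h.symm) s else τ ⟨j, h⟩

open Classical in
/-- The play of the game from history `h` under profile `sp`, with fuel `f`. -/
def playFrom (G : ExtGame n) (sp : (j : Fin n) → G.PStrat j) :
    ℕ → List G.Act → List G.Act
  | 0, h => h
  | f + 1, h =>
      if G.Dec h then
        G.playFrom sp f (h ++ [(sp (G.owner h)).val (G.label h)])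
      else h

/-- The terminal history reached by the profile `sp`. -/
def outcome (G : ExtGame n) (sp : (j : Fin n) → G.PStrat j) : List G.Act :=
  G.playFrom sp (G.maxLen + 1) []

/-- Player `i`'s utility under the profile `sp`. -/
def U (G : ExtGame n) (i : Fin n) (sp : (j : Fin n) → G.PStrat j) : ℝ :=
  G.payoff i (G.outcome sp)

/-- The profile `sp` reaches the information set `c` of player `i`. -/
def Reaches (G : ExtGame n) (sp : (j : Fin n) → G.PStrat j) (i : Fin n) (c : G.Lab) :
    Prop :=
  ∃ p, p <+: G.outcome sp ∧ G.DecOf i p ∧ G.label p = c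

/-- `Σ'_{σ,I,-i}`: the opponents' profiles in `T` for which `(σ, τ₋ᵢ)` reaches `c`. -/
def ReachSet (G : ExtGame n) (i : Fin n) (σ : G.PStrat i) (c : G.Lab)
    (T : Set (G.OppProf i)) : Set (G.OppProf i) :=
  {τ ∈ T | G.Reaches (G.combine i σ τ) i c}

/-- `Σ'_{σ,σ',I,-i}` for a mixed strategy `m`. -/
def ReachSetMix (G : ExtGame n) (i : Fin n) (σ : G.PStrat i) (m : G.PStrat i → ℝ)
    (c : G.Lab) (T : Set (G.OppProf i)) : Set (G.OppProf i) :=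
  {τ ∈ T | G.Reaches (G.combine i σ τ) i c ∧
    ∀ s, 0 < m s → G.Reaches (G.combine i s τ) i c}

/-- Utility of the mixed strategy `m` of player `i` against the opponents' profile `τ`. -/
def EUmixE (G : ExtGame n) (i : Fin n) (m : G.PStrat i → ℝ) (τ : G.OppProf i) : ℝ :=
  ∑ s : G.PStrat i, m s * G.U i (G.combine i s τ)

/-- `σ` is conditionally dominated on `Σ'_i × T`. -/
def CondDom (G : ExtGame n) (i : Fin n) (σ : G.PStrat i) (T : Set (G.OppProf i)) :
    Prop :=
  ∃ c, G.IsInfo i c ∧ ∃ m : G.PStrat i → ℝ, IsDist m ∧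
    (G.ReachSetMix i σ m c T).Nonempty ∧
    ∀ τ ∈ G.ReachSetMix i σ m c T, G.U i (G.combine i σ τ) < G.EUmixE i m τ

/-- The information set `c'` of player `i` is at or below `c`. -/
def AtOrBelow (G : ExtGame n) (i : Fin n) (c' c : G.Lab) : Prop :=
  ∃ h h', G.DecOf i h ∧ G.DecOf i h' ∧ G.label h' = c ∧ G.label h = c' ∧ h' <+: h

/-- The information set `c'` of player `i` precedes `c`. -/
def Precedes (G : ExtGame n) (i : Fin n) (c' c : G.Lab) : Prop :=
  ∃ h h', G.DecOf i h ∧ G.DecOf i h' ∧ G.label h = c' ∧ G.label h' = c ∧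
    h <+: h' ∧ h ≠ h'

/-- `σ` is conditionally dominated′ on `Σ'_i × T`. -/
def CondDom' (G : ExtGame n) (i : Fin n) (σ : G.PStrat i) (T : Set (G.OppProf i)) :
    Prop :=
  ∃ c, G.IsInfo i c ∧ (G.ReachSet i σ c T).Nonempty ∧
    ∃ m : G.PStrat i → ℝ, IsDist m ∧
      (∀ s, 0 < m s → ∀ c', G.IsInfo i c' → ¬G.AtOrBelow i c' c →
        s.val c' = σ.val c') ∧
      ∀ τ ∈ G.ReachSet i σ c T, G.U i (G.combine i σ τ) < G.EUmixE i m τ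

/-- `σ` is weakly dominated by the mixed strategy `m` with respect to `T`. -/
def WDomE (G : ExtGame n) (i : Fin n) (m : G.PStrat i → ℝ) (σ : G.PStrat i)
    (T : Set (G.OppProf i)) : Prop :=
  (∀ τ ∈ T, G.U i (G.combine i σ τ) ≤ G.EUmixE i m τ) ∧
    ∃ τ ∈ T, G.U i (G.combine i σ τ) < G.EUmixE i m τ

/-- `σ` is an almost-best response conditional on reaching the information set `c` to the
first measure of `L | E`. -/
def AlmostBestAt (G : ExtGame n) (i : Fin n) (σ : G.PStrat i) (c : G.Lab)
    (L : LPS (G.OppProf i)) (E : Set (G.OppProf i)) : Prop :=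
  ∀ σ' : G.PStrat i,
    (∀ c', G.IsInfo i c' → G.Precedes i c' c → σ'.val c' = σ.val c') →
    L.condExp E (fun τ => G.U i (G.combine i σ' τ)) ≤
      L.condExp E (fun τ => G.U i (G.combine i σ τ))

end ExtGame

end
section AuxLemmas

open List in
theorem aux_prefix_of_prefix_length_le {α : Type*} {l₁ l₂ l₃ : List α}
    (h1 : l₁ <+: l₃) (h2 : l₂ <+: l₃) (h : l₁.length ≤ l₂.length) : l₁ <+: l₂ := by
  obtain ⟨t, rfl⟩ := h2
  have h1' := List.prefix_iff_eq_take.mp h1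
  rw [List.take_append, Nat.sub_eq_zero_of_le h, List.take_zero,
    List.append_nil] at h1'
  exact h1' ▸ List.take_prefix _ _

theorem aux_exists_snoc_prefix {α : Type*} {q h : List α} (hp : q <+: h) (hne : q ≠ h) :
    ∃ a, q ++ [a] <+: h := by
  obtain ⟨t, rfl⟩ := hp
  cases t with
  | nil => simp at hne
  | cons a t' => exact ⟨a, ⟨t', by simp⟩⟩

theorem aux_length_lt_of_prefix_ne {α : Type*} {q h : List α} (hp : q <+: h) (hne : q ≠ h) :
    q.length < h.length := by
  rcases Nat.lt_or_ge q.length h.length with h' | h'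
  · exact h'
  · exact absurd (hp.eq_of_length (le_antisymm hp.length_le h')) hne

theorem aux_prefix_snoc {α : Type*} {q h : List α} {a b : α}
    (hp : q ++ [a] <+: h ++ [b]) : q ++ [a] <+: h ∨ (q = h ∧ a = b) := by
  rcases Nat.lt_or_ge (q ++ [a]).length (h ++ [b]).length with hlt | hge
  · left
    refine aux_prefix_of_prefix_length_le hp (List.prefix_append h [b]) ?_
    simp only [List.length_append, List.length_singleton] at hlt ⊢
    omega
  · right
    have hlen : (q ++ [a]).length = (h ++ [b]).length :=
      le_antisymm hp.length_le hge
    have := hp.eq_of_length hlen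
    have := List.append_inj' this rfl
    exact ⟨this.1, by simpa using this.2⟩

/-- Membership characterization for `experGo`. -/
theorem mem_experGo {Act Lab ι : Type*} [DecidableEq ι] (o : List Act → ι)
    (l : List Act → Lab) (i : ι) :
    ∀ (rest pre : List Act) (x : Lab × Act),
      x ∈ experGo o l i pre rest ↔
        ∃ q b, q ++ [b] <+: rest ∧ o (pre ++ q) = i ∧ x = (l (pre ++ q), b) := by
  intro rest
  induction rest with
  | nil =>
      intro pre x
      simp only [experGo, List.not_mem_nil, false_iff]
      rintro ⟨q, b, ⟨t, ht⟩, -, -⟩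
      simpa using congrArg List.length ht
  | cons a rest ih =>
      intro pre x
      rw [experGo]
      simp only [List.mem_append]
      constructor
      · rintro (hx | hx)
        · by_cases ho : o pre = i
          · rw [if_pos ho] at hx
            simp only [List.mem_singleton] at hx
            exact ⟨[], a, ⟨rest, by simp⟩, by simpa using ho, by simpa using hx⟩
          · rw [if_neg ho] at hx
            simp at hx
        · obtain ⟨q, b, hqb, ho, hx⟩ := (ih (pre ++ [a]) x).mp hx
          obtain ⟨t, ht⟩ := hqb
          refine ⟨a :: q, b, ⟨t, by simp [ht]⟩, ?_, ?_⟩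
          · simpa [List.append_assoc] using ho
          · simpa [List.append_assoc] using hx
      · rintro ⟨q, b, hqb, ho, hx⟩
        cases q with
        | nil =>
            obtain ⟨t, ht⟩ := hqb
            simp only [List.nil_append, List.cons_append] at ht
            obtain ⟨rfl, -⟩ := List.cons.inj ht
            left
            simp only [List.append_nil] at ho hx
            rw [if_pos ho]
            simp [hx]
        | cons a' q' =>
            obtain ⟨ha', hqb'⟩ := List.cons_prefix_cons.mp (by simpa using hqb)
            right
            refine (ih (pre ++ [a]) x).mpr ⟨q', b, hqb', ?_, ?_⟩
            · simpa [List.append_assoc, ha'] using ho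
            · simpa [List.append_assoc, ha'] using hx

namespace ExtGame

variable {n : ℕ}

theorem combine_self (G : ExtGame n) (i : Fin n) (s : G.PStrat i) (τ : G.OppProf i) :
    G.combine i s τ i = s := by
  simp [ExtGame.combine]

theorem combine_ne (G : ExtGame n) (i : Fin n) (s : G.PStrat i) (τ : G.OppProf i)
    {j : Fin n} (hj : j ≠ i) : G.combine i s τ j = τ ⟨j, hj⟩ := by
  simp [ExtGame.combine, hj]

theorem mem_H_of_append (G : ExtGame n) :
    ∀ t q : List G.Act, q ++ t ∈ G.H → q ∈ G.H := by
  intro t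
  induction t using List.reverseRecOn with
  | nil => intro q hq; simpa using hq
  | append_singleton t' a ih =>
      intro q hq
      have h1 : (q ++ t') ++ [a] ∈ G.H := by simpa [List.append_assoc] using hq
      exact ih q (G.prefix_closed _ _ h1)

theorem mem_H_of_prefix (G : ExtGame n) {q h : List G.Act} (hh : h ∈ G.H)
    (hq : q <+: h) : q ∈ G.H := by
  obtain ⟨t, rfl⟩ := hq
  exact G.mem_H_of_append t q hh

/-- The profile `sp` takes exactly the actions along `p`. -/
def Follows (G : ExtGame n) (sp : (j : Fin n) → G.PStrat j) (p : List G.Act) : Prop :=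
  ∀ q a, q ++ [a] <+: p → a = (sp (G.owner q)).val (G.label q)

theorem Follows.mono {G : ExtGame n} {sp : (j : Fin n) → G.PStrat j}
    {p p' : List G.Act} (hf : G.Follows sp p') (hp : p <+: p') : G.Follows sp p :=
  fun q a hq => hf q a (hq.trans hp)

theorem self_prefix_playFrom (G : ExtGame n) (sp : (j : Fin n) → G.PStrat j) :
    ∀ (f : ℕ) (h : List G.Act), h <+: G.playFrom sp f h := by
  intro f
  induction f with
  | zero => intro h; simp [ExtGame.playFrom]
  | succ f ih =>
      intro h
      rw [ExtGame.playFrom]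
      split
      · exact (List.prefix_append h _).trans (ih _)
      · exact List.prefix_rfl

theorem follows_playFrom (G : ExtGame n) (sp : (j : Fin n) → G.PStrat j) :
    ∀ (f : ℕ) (h : List G.Act), G.Follows sp h → G.Follows sp (G.playFrom sp f h) := by
  intro f
  induction f with
  | zero => intro h hf; simpa [ExtGame.playFrom] using hf
  | succ f ih =>
      intro h hf
      rw [ExtGame.playFrom]
      split
      · refine ih _ ?_
        intro q a hq
        rcases aux_prefix_snoc hq with h1 | ⟨rfl, rfl⟩
        · exact hf q a h1
        · rfl
      · exact hf

theorem follows_outcome (G : ExtGame n) (sp : (j : Fin n) → G.PStrat j) :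
    G.Follows sp (G.outcome sp) := by
  refine G.follows_playFrom _ _ _ ?_
  intro q a hq
  obtain ⟨t, ht⟩ := hq
  simpa using congrArg List.length ht

theorem prefix_playFrom_of_follows (G : ExtGame n) (sp : (j : Fin n) → G.PStrat j) :
    ∀ (f : ℕ) (h p : List G.Act), h <+: p → p ∈ G.H → G.Follows sp p →
      p.length ≤ h.length + f → p <+: G.playFrom sp f h := by
  intro f
  induction f with
  | zero =>
      intro h p hpre hH hfoll hlen
      have : h = p := hpre.eq_of_length (le_antisymm hpre.length_le (by omega))
      subst this
      simp [ExtGame.playFrom]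
  | succ f ih =>
      intro h p hpre hH hfoll hlen
      by_cases he : h = p
      · subst he
        exact G.self_prefix_playFrom sp _ _
      · obtain ⟨a, ha⟩ := aux_exists_snoc_prefix hpre he
        have hd : G.Dec h :=
          ⟨G.mem_H_of_prefix hH hpre, a, G.mem_H_of_prefix hH ha⟩
        rw [ExtGame.playFrom, if_pos hd]
        have hac : a = (sp (G.owner h)).val (G.label h) := hfoll h a ha
        rw [← hac]
        refine ih _ p ha hH hfoll ?_
        have := aux_length_lt_of_prefix_ne hpre he
        simp only [List.length_append, List.length_singleton]
        omega

theorem playFrom_through (G : ExtGame n) (sp : (j : Fin n) → G.PStrat j) :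
    ∀ (f : ℕ) (h p : List G.Act), h <+: p → p <+: G.playFrom sp f h →
      G.playFrom sp f h = G.playFrom sp (f - (p.length - h.length)) p := by
  intro f
  induction f with
  | zero =>
      intro h p h1 h2
      rw [ExtGame.playFrom] at h2 ⊢
      have hp : p = h := h2.eq_of_length (le_antisymm h2.length_le h1.length_le)
      subst hp
      simp [ExtGame.playFrom]
  | succ f ih =>
      intro h p h1 h2
      by_cases he : h = p
      · subst he
        simp
      · have hlt := aux_length_lt_of_prefix_ne h1 he
        by_cases hd : G.Dec h
        · rw [ExtGame.playFrom, if_pos hd] at h2 ⊢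
          set h' := h ++ [(sp (G.owner h)).val (G.label h)] with hh'
          have hh'len : h'.length = h.length + 1 := by simp [hh']
          have hh'p : h' <+: p := by
            refine aux_prefix_of_prefix_length_le (G.self_prefix_playFrom sp f h') h2 ?_
            omega
          rw [ih h' p hh'p h2]
          congr 1
          omega
        · rw [ExtGame.playFrom, if_neg hd] at h2
          have : p = h := h2.eq_of_length (le_antisymm h2.length_le h1.length_le)
          exact absurd this.symm he

theorem outcome_through (G : ExtGame n) (sp : (j : Fin n) → G.PStrat j)
    {p : List G.Act} (hp : p <+: G.outcome sp) :
    G.outcome sp = G.playFrom sp (G.maxLen + 1 - p.length) p := by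
  have := G.playFrom_through sp (G.maxLen + 1) [] p List.nil_prefix hp
  rw [ExtGame.outcome]
  simpa using this

theorem playFrom_congr (G : ExtGame n) (sp sp' : (j : Fin n) → G.PStrat j)
    (p : List G.Act)
    (hag : ∀ q, p <+: q → G.Dec q →
      (sp (G.owner q)).val (G.label q) = (sp' (G.owner q)).val (G.label q)) :
    ∀ (f : ℕ) (h : List G.Act), p <+: h → G.playFrom sp f h = G.playFrom sp' f h := by
  intro f
  induction f with
  | zero => intro h _; rfl
  | succ f ih =>
      intro h hp
      rw [ExtGame.playFrom, ExtGame.playFrom]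
      by_cases hd : G.Dec h
      · rw [if_pos hd, if_pos hd, hag h hp hd]
        exact ih _ (hp.trans (List.prefix_append _ _))
      · rw [if_neg hd, if_neg hd]

theorem reaches_of_follows (G : ExtGame n) (i : Fin n)
    {sp : (j : Fin n) → G.PStrat j} {p : List G.Act} {c : G.Lab}
    (dp : G.DecOf i p) (hl : G.label p = c) (hf : G.Follows sp p) :
    p <+: G.outcome sp := by
  refine G.prefix_playFrom_of_follows sp (G.maxLen + 1) [] p List.nil_prefix
    dp.1.1 hf ?_
  have := G.len_bound p dp.1.1
  simp only [List.length_nil]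
  omega

theorem follows_combine_of_agree (G : ExtGame n) (i : Fin n)
    {σ s : G.PStrat i} {τ : G.OppProf i} {p : List G.Act}
    (hf : G.Follows (G.combine i σ τ) p)
    (hag : ∀ q a, q ++ [a] <+: p → G.owner q = i →
      s.val (G.label q) = σ.val (G.label q)) :
    G.Follows (G.combine i s τ) p := by
  intro q a hq
  have hσ := hf q a hq
  by_cases ho : G.owner q = i
  · rw [ho, G.combine_self] at hσ ⊢
    rw [hag q a hq ho]
    exact hσ
  · rw [G.combine_ne i s τ ho]
    rw [G.combine_ne i σ τ ho] at hσ
    exact hσ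

/-- No information set of `i` strictly above a node of `c` is at or below `c`. -/
theorem not_atOrBelow_of_above (G : ExtGame n) (i : Fin n)
    {h p : List G.Act} {c : G.Lab}
    (dh : G.DecOf i h) (dp : G.DecOf i p) (hlp : G.label p = c)
    (hpre : h <+: p) (hne : h ≠ p) : ¬ G.AtOrBelow i (G.label h) c := by
  rintro ⟨g, h'', dg, dh'', hlh''c, hlg, hpre2⟩
  by_cases hgh : h'' = g
  · subst hgh
    have hlh : G.label h = G.label p := by rw [← hlg, hlh''c, hlp]
    exact hne (G.no_two_on_path h p dh.1.1 dp.1.1 dh.1.2 dp.1.2 hlh hpre)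
  · have hexp := G.perfect_recall h g dh.1.1 dg.1.1 dh.1.2 dg.1.2 hlg.symm
    rw [dh.2] at hexp
    obtain ⟨b, hb⟩ := aux_exists_snoc_prefix hpre2 (fun hh => hgh hh)
    have hmem : (G.label h'', b) ∈ experGo G.owner G.label i [] g :=
      (mem_experGo G.owner G.label i g [] _).mpr
        ⟨h'', b, by simpa using hb, by simpa using dh''.2, by simp⟩
    rw [← hexp] at hmem
    obtain ⟨q, b2, hq, hoq, hx⟩ := (mem_experGo G.owner G.label i h [] _).mp hmem
    simp only [List.nil_append] at hq hoq hx
    have hxx := Prod.mk.injEq .. ▸ hx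
    have hlq : G.label q = c := by
      rw [← hlh''c]
      exact (congrArg Prod.fst hx).symm
    have hqh : q ++ [b2] <+: h := hq
    have hqH : q ∈ G.H := G.mem_H_of_prefix dh.1.1 ((List.prefix_append q [b2]).trans hqh)
    have hqb2H : q ++ [b2] ∈ G.H := G.mem_H_of_prefix dh.1.1 hqh
    have hqp : q <+: p := ((List.prefix_append q [b2]).trans hqh).trans hpre
    have : q = p :=
      G.no_two_on_path q p hqH dp.1.1 ⟨b2, hqb2H⟩ dp.1.2 (hlq.trans hlp.symm) hqp
    have hql : (q ++ [b2]).length ≤ h.length := hqh.length_le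
    have hhl : h.length ≤ p.length := hpre.length_le
    simp only [List.length_append, List.length_singleton] at hql
    rw [this] at hql
    omega

/-- Strategies that both reach nodes of `c` agree above `c` (via perfect recall). -/
theorem agree_above (G : ExtGame n) (i : Fin n)
    {σ s : G.PStrat i} {τ τ' : G.OppProf i} {p p' : List G.Act} {c : G.Lab}
    (hf : G.Follows (G.combine i σ τ) p) (hf' : G.Follows (G.combine i s τ') p')
    (dp : G.DecOf i p) (dp' : G.DecOf i p') (hlp : G.label p = c) (hlp' : G.label p' = c) :
    ∀ q a, q ++ [a] <+: p → G.owner q = i →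
      s.val (G.label q) = σ.val (G.label q) := by
  have hexp := G.perfect_recall p p' dp.1.1 dp'.1.1 dp.1.2 dp'.1.2 (hlp.trans hlp'.symm)
  rw [dp.2] at hexp
  intro q a hq hoq
  have ha : a = σ.val (G.label q) := by
    have := hf q a hq
    rwa [hoq, G.combine_self] at this
  have hmem : (G.label q, a) ∈ experGo G.owner G.label i [] p :=
    (mem_experGo G.owner G.label i p [] _).mpr ⟨q, a, by simpa using hq, by simpa using hoq, by simp⟩
  rw [hexp] at hmem
  obtain ⟨q', b, hq', hoq', hx⟩ := (mem_experGo G.owner G.label i p' [] _).mp hmem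
  simp only [List.nil_append] at hq' hoq' hx
  have hb : b = s.val (G.label q') := by
    have := hf' q' b hq'
    rwa [hoq', G.combine_self] at this
  have h1 : G.label q = G.label q' := congrArg Prod.fst hx
  have h2 : a = b := congrArg Prod.snd hx
  rw [h1, ← hb, ← h2, ha, h1]

open Classical in
/-- Replace the behavior of `s` away from (at or below) `c` by that of `σ`. -/
noncomputable def surgery (G : ExtGame n) (i : Fin n) (σ : G.PStrat i) (c : G.Lab) (s : G.PStrat i) :
    G.PStrat i :=
  ⟨fun c' => if G.AtOrBelow i c' c then s.val c' else σ.val c', by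
    intro h dh
    by_cases hb : G.AtOrBelow i (G.label h) c
    · simpa [hb] using s.2 h dh
    · simpa [hb] using σ.2 h dh⟩

theorem surgery_val_of_atOrBelow (G : ExtGame n) (i : Fin n) (σ : G.PStrat i)
    (c : G.Lab) (s : G.PStrat i) {c' : G.Lab} (h : G.AtOrBelow i c' c) :
    (G.surgery i σ c s).val c' = s.val c' := by
  simp [ExtGame.surgery, h]

theorem surgery_val_of_not (G : ExtGame n) (i : Fin n) (σ : G.PStrat i)
    (c : G.Lab) (s : G.PStrat i) {c' : G.Lab} (h : ¬ G.AtOrBelow i c' c) :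
    (G.surgery i σ c s).val c' = σ.val c' := by
  simp [ExtGame.surgery, h]

end ExtGame

end AuxLemmas


/-- conditional dominance′ coincides with conditional dominance. -/
theorem condDom'_iff_condDom {n : ℕ} (G : ExtGame n) (i : Fin n)
    (Ti : Set (G.PStrat i)) (T : Set (G.OppProf i)) (σ : G.PStrat i) (hσ : σ ∈ Ti) :
    G.CondDom' i σ T ↔ G.CondDom i σ T := by
  classical
  constructor
  · rintro ⟨c, hinfo, ⟨τ₀, hτ₀T, hτ₀r⟩, m, hdist, hagree, hdom⟩
    refine ⟨c, hinfo, m, hdist, ⟨τ₀, hτ₀T, hτ₀r, ?_⟩, ?_⟩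
    · intro s hs
      obtain ⟨p, hpre, dp, hl⟩ := hτ₀r
      have hfp : G.Follows (G.combine i σ τ₀) p := (G.follows_outcome _).mono hpre
      have hfs : G.Follows (G.combine i s τ₀) p := by
        refine G.follows_combine_of_agree i hfp ?_
        intro q a hq ho
        have hqp : q <+: p := (List.prefix_append q [a]).trans hq
        have dq : G.DecOf i q :=
          ⟨⟨G.mem_H_of_prefix dp.1.1 hqp, a, G.mem_H_of_prefix dp.1.1 hq⟩, ho⟩
        have hne : q ≠ p := by
          intro h
          have := hq.length_le
          simp [h] at this
        exact hagree s hs _ ⟨q, dq, rfl⟩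
          (G.not_atOrBelow_of_above i dq dp hl hqp hne)
      exact ⟨p, G.reaches_of_follows i dp hl hfs, dp, hl⟩
    · intro τ hτ
      exact hdom τ ⟨hτ.1, hτ.2.1⟩
  · rintro ⟨c, hinfo, m, hdist, ⟨τ₀, hτ₀T, hτ₀σ, hτ₀all⟩, hdom⟩
    set F := G.surgery i σ c with hFdef
    have key : ∀ τ, G.Reaches (G.combine i σ τ) i c → ∀ s, 0 < m s →
        G.Reaches (G.combine i s τ) i c ∧
          G.U i (G.combine i (F s) τ) = G.U i (G.combine i s τ) := by
      intro τ hr s hs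
      obtain ⟨p, hpre, dp, hl⟩ := hr
      obtain ⟨p', hpre', dp', hl'⟩ := hτ₀all s hs
      have hfp : G.Follows (G.combine i σ τ) p := (G.follows_outcome _).mono hpre
      have hfp' : G.Follows (G.combine i s τ₀) p' := (G.follows_outcome _).mono hpre'
      have hag := G.agree_above i hfp hfp' dp dp' hl hl'
      have hfs : G.Follows (G.combine i s τ) p :=
        G.follows_combine_of_agree i hfp (fun q a hq ho => hag q a hq ho)
      have hagF : ∀ q a, q ++ [a] <+: p → G.owner q = i →
          (F s).val (G.label q) = σ.val (G.label q) := by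
        intro q a hq ho
        have hqp : q <+: p := (List.prefix_append q [a]).trans hq
        have dq : G.DecOf i q :=
          ⟨⟨G.mem_H_of_prefix dp.1.1 hqp, a, G.mem_H_of_prefix dp.1.1 hq⟩, ho⟩
        have hne : q ≠ p := by
          intro h
          have := hq.length_le
          simp [h] at this
        exact G.surgery_val_of_not i σ c s
          (G.not_atOrBelow_of_above i dq dp hl hqp hne)
      have hfF : G.Follows (G.combine i (F s) τ) p :=
        G.follows_combine_of_agree i hfp hagF
      have hps : p <+: G.outcome (G.combine i s τ) := G.reaches_of_follows i dp hl hfs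
      have hpF : p <+: G.outcome (G.combine i (F s) τ) := G.reaches_of_follows i dp hl hfF
      refine ⟨⟨p, hps, dp, hl⟩, ?_⟩
      have hout : G.outcome (G.combine i (F s) τ) = G.outcome (G.combine i s τ) := by
        rw [G.outcome_through _ hpF, G.outcome_through _ hps]
        refine G.playFrom_congr _ _ p ?_ _ p List.prefix_rfl
        intro q hpq hdq
        by_cases ho : G.owner q = i
        · rw [ho, G.combine_self, G.combine_self]
          exact G.surgery_val_of_atOrBelow i σ c s ⟨q, p, ⟨hdq, ho⟩, dp, hl, rfl, hpq⟩
        · rw [G.combine_ne _ _ _ ho, G.combine_ne _ _ _ ho]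
      rw [ExtGame.U, ExtGame.U, hout]
    have hsum : ∀ g : G.PStrat i → ℝ,
        (∑ t, (∑ s ∈ Finset.univ.filter (fun s => F s = t), m s) * g t) =
          ∑ s, m s * g (F s) := by
      intro g
      have h1 : ∀ t, (∑ s ∈ Finset.univ.filter (fun s => F s = t), m s) * g t =
          ∑ s ∈ Finset.univ.filter (fun s => F s = t), m s * g (F s) := by
        intro t
        rw [Finset.sum_mul]
        exact Finset.sum_congr rfl (fun s hs => by rw [(Finset.mem_filter.mp hs).2])
      rw [Finset.sum_congr rfl (fun t _ => h1 t)]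
      exact Finset.sum_fiberwise _ _ _
    refine ⟨c, hinfo, ⟨τ₀, hτ₀T, hτ₀σ⟩,
      fun t => ∑ s ∈ Finset.univ.filter (fun s => F s = t), m s, ⟨?_, ?_⟩, ?_, ?_⟩
    · exact fun t => Finset.sum_nonneg fun s _ => hdist.1 s
    · rw [Finset.sum_fiberwise _ _ _]
      exact hdist.2
    · intro t ht c' hc' hnb
      have hex : ∃ s ∈ Finset.univ.filter (fun s => F s = t), 0 < m s := by
        by_contra hcon
        push_neg at hcon
        have h0 : (∑ s ∈ Finset.univ.filter (fun s => F s = t), m s) = 0 :=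
          Finset.sum_eq_zero fun s hs => le_antisymm (hcon s hs) (hdist.1 s)
        have ht' : 0 < ∑ s ∈ Finset.univ.filter (fun s => F s = t), m s := ht
        rw [h0] at ht'
        exact lt_irrefl _ ht'
      obtain ⟨s, hsf, hpos⟩ := hex
      rw [← (Finset.mem_filter.mp hsf).2]
      exact G.surgery_val_of_not i σ c s hnb
    · intro τ hτ
      have hτmix : τ ∈ G.ReachSetMix i σ m c T :=
        ⟨hτ.1, hτ.2, fun s hs => (key τ hτ.2 s hs).1⟩
      have h1 : G.EUmixE i (fun t => ∑ s ∈ Finset.univ.filter (fun s => F s = t), m s) τ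
          = G.EUmixE i m τ := by
        rw [ExtGame.EUmixE, ExtGame.EUmixE,
          hsum (fun t => G.U i (G.combine i t τ))]
        refine Finset.sum_congr rfl (fun s _ => ?_)
        rcases (hdist.1 s).eq_or_lt with h | h
        · rw [← h, zero_mul, zero_mul]
        · rw [(key τ hτ.2 s h).2]
      rw [h1]
      exact hdom τ hτmix
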